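/- Fix an integer d ≥ 1 and a real s > d, and let U^d = [0,1]^d. There is a constant C > 0, depending only on s and d, such that for every γ ∈ (0,1), every positive integer m, and every positive integer N, one has ℰ_s(U^d, m^d N)/(m^d N)^{1+s/d} ≤ γ^{−s} · ℰ_s(U^d, N)/N^{1+s/d} + C (1−γ)^{−s} N^{1−s/d}. -/

import Mathlib

open scoped ENNReal NNReal BigOperators Classical
open MeasureTheory Filter Metric Set Topology

/-- The Riesz `s`-energy of a finite configuration `ω`, valued in `[0,∞]`. -/
noncomputable def rieszEnergy {E : Type*} [PseudoEMetricSpace E] (s : ℝ) (ω : Finset E) : ℝ≥0∞ :=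
  ∑ x ∈ ω, ∑ y ∈ ω, if x = y then 0 else edist x y ^ (-s)

/-- The `N`-point minimal Riesz `s`-energy over a set `A` (infimum over all `N`-point
subsets of `A`; `∞` if there is none). -/
noncomputable def minRieszEnergy {E : Type*} [PseudoEMetricSpace E] (s : ℝ) (A : Set E)
    (N : ℕ) : ℝ≥0∞ :=
  ⨅ (ω : Finset E) (_ : ↑ω ⊆ A) (_ : ω.card = N), rieszEnergy s ω

/-- The unit cube `[0,1]^d` in `ℝ^d`. -/
def unitCube (d : ℕ) : Set (EuclideanSpace ℝ (Fin d)) := {x | ∀ i, x i ∈ Set.Icc (0 : ℝ) 1}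

noncomputable def cellMap {d m : ℕ} (γ : ℝ) (j : Fin d → Fin m)
    (x : EuclideanSpace ℝ (Fin d)) : EuclideanSpace ℝ (Fin d) :=
  WithLp.toLp 2 (fun i => (γ * x i + (j i : ℝ) + (1 - γ) / 2) / m)

lemma cellMap_apply {d m : ℕ} (γ : ℝ) (j : Fin d → Fin m) (x : EuclideanSpace ℝ (Fin d))
    (i : Fin d) : cellMap γ j x i = (γ * x i + (j i : ℝ) + (1 - γ) / 2) / m := rfl

lemma abs_coord_le_dist {d : ℕ} (x y : EuclideanSpace ℝ (Fin d)) (i : Fin d) :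
    |x i - y i| ≤ dist x y := by
  rw [EuclideanSpace.dist_eq, ← Real.sqrt_sq_eq_abs]
  apply Real.sqrt_le_sqrt
  have := Finset.single_le_sum (f := fun j => dist (x j) (y j) ^ 2)
    (fun j _ => sq_nonneg _) (Finset.mem_univ i)
  simpa [Real.dist_eq, sq_abs] using this

lemma cellMap_mem {d m : ℕ} {γ : ℝ} (hγ0 : 0 < γ) (hγ1 : γ < 1) (hm : 0 < m)
    (j : Fin d → Fin m) {x : EuclideanSpace ℝ (Fin d)} (hx : x ∈ unitCube d) :
    cellMap γ j x ∈ unitCube d := by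
  intro i
  have hx0 := (hx i).1
  have hx1 := (hx i).2
  have hji : (j i : ℝ) ≤ (m : ℝ) - 1 := by
    have h1 : (j i : ℕ) + 1 ≤ m := (j i).isLt
    have h2 : ((j i : ℕ) : ℝ) + 1 ≤ m := by exact_mod_cast h1
    linarith
  rw [Set.mem_Icc, cellMap_apply]
  constructor
  · apply div_nonneg _ (by positivity)
    nlinarith
  · rw [div_le_one (by positivity)]
    nlinarith

lemma cellMap_dist_same {d m : ℕ} {γ : ℝ} (hγ0 : 0 ≤ γ) (hm : 0 < m)
    (j : Fin d → Fin m) (x y : EuclideanSpace ℝ (Fin d)) :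
    dist (cellMap γ j x) (cellMap γ j y) = γ / m * dist x y := by
  have hc : (0:ℝ) ≤ γ / m := by positivity
  have hm0 : (m:ℝ) ≠ 0 := by positivity
  rw [EuclideanSpace.dist_eq, EuclideanSpace.dist_eq]
  have hkey : ∀ i : Fin d, dist (cellMap γ j x i) (cellMap γ j y i)
      = (γ/m) * dist (x i) (y i) := by
    intro i
    rw [Real.dist_eq, Real.dist_eq, cellMap_apply, cellMap_apply]
    rw [show (γ * x i + (j i : ℝ) + (1-γ)/2)/m - (γ * y i + (j i : ℝ) + (1-γ)/2)/m
      = (γ/m)*(x i - y i) by field_simp; ring]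
    rw [abs_mul, abs_of_nonneg hc]
  simp_rw [hkey, mul_pow, ← Finset.mul_sum]
  rw [Real.sqrt_mul (sq_nonneg _), Real.sqrt_sq hc]

lemma cellMap_inj {d m : ℕ} {γ : ℝ} (hγ0 : 0 < γ) (hγ1 : γ < 1)
    {j k : Fin d → Fin m} {x y : EuclideanSpace ℝ (Fin d)}
    (hx : x ∈ unitCube d) (hy : y ∈ unitCube d) (hm : 0 < m)
    (h : cellMap γ j x = cellMap γ k y) : j = k ∧ x = y := by
  have hm0 : (m:ℝ) ≠ 0 := by positivity
  have key : ∀ i, (j i : ℝ) = k i ∧ x i = y i := by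
    intro i
    have hi : cellMap γ j x i = cellMap γ k y i := by rw [h]
    rw [cellMap_apply, cellMap_apply, div_eq_div_iff (by positivity) (by positivity)] at hi
    have h1 : γ * x i + (j i : ℝ) = γ * y i + k i := by
      have h2 := mul_right_cancel₀ hm0 hi
      linarith
    have hxb := hx i; have hyb := hy i
    have habs : |(j i : ℝ) - k i| < 1 := by
      have he : (j i : ℝ) - k i = γ * (y i - x i) := by linarith
      rw [he, abs_mul, abs_of_pos hγ0]
      have hyx : |y i - x i| ≤ 1 := by
        rw [abs_le]
        exact ⟨by nlinarith [hxb.1, hxb.2, hyb.1, hyb.2], by nlinarith [hxb.1, hxb.2, hyb.1, hyb.2]⟩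
      nlinarith [abs_nonneg (y i - x i)]
    have hjk : (j i : ℝ) = k i := by
      have hcast : ((j i : ℕ) : ℝ) - ((k i : ℕ) : ℝ)
          = (((j i : ℕ) : ℤ) - ((k i : ℕ) : ℤ) : ℤ) := by push_cast; ring
      rw [hcast] at habs
      have hz : ((j i : ℕ) : ℤ) - ((k i : ℕ) : ℤ) = 0 :=
        Int.abs_lt_one_iff.mp (by exact_mod_cast habs)
      have hz' : ((j i : ℕ) : ℤ) = ((k i : ℕ) : ℤ) := by omega
      exact_mod_cast hz'
    refine ⟨hjk, ?_⟩
    nlinarith [h1]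
  constructor
  · funext i
    have h1 := (key i).1
    have h2 : (j i : ℕ) = (k i : ℕ) := by exact_mod_cast h1
    exact Fin.ext h2
  · apply PiLp.ext; intro i
    exact (key i).2

lemma natDist_cast_real (a b : ℕ) : (Nat.dist a b : ℝ) = |(a:ℝ) - b| := by
  rcases le_total a b with hab | hab
  · rw [Nat.dist_eq_sub_of_le hab, abs_sub_comm,
      abs_of_nonneg (sub_nonneg.mpr (by exact_mod_cast hab : (a:ℝ) ≤ b)), Nat.cast_sub hab]
  · rw [Nat.dist_eq_sub_of_le_right hab,
      abs_of_nonneg (sub_nonneg.mpr (by exact_mod_cast hab : (b:ℝ) ≤ a)), Nat.cast_sub hab]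

/-- sup-distance of two grid indices -/
def gridDist {d m : ℕ} (j k : Fin d → Fin m) : ℕ :=
  Finset.univ.sup (fun i => Nat.dist (j i) (k i))

lemma one_le_gridDist {d m : ℕ} {j k : Fin d → Fin m} (h : j ≠ k) : 1 ≤ gridDist j k := by
  obtain ⟨i, hi⟩ := Function.ne_iff.mp h
  have h1 : 1 ≤ Nat.dist (j i) (k i) := by
    have : (j i : ℕ) ≠ (k i : ℕ) := fun hc => hi (Fin.ext hc)
    unfold Nat.dist; omega
  simp only [gridDist]
  exact le_trans h1 (Finset.le_sup (f := fun i => Nat.dist (j i) (k i)) (Finset.mem_univ i))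

lemma cellMap_dist_cross {d m : ℕ} {γ : ℝ} (hγ0 : 0 < γ) (hγ1 : γ < 1) (hm : 0 < m)
    {j k : Fin d → Fin m} (hjk : j ≠ k) {x y : EuclideanSpace ℝ (Fin d)}
    (hx : x ∈ unitCube d) (hy : y ∈ unitCube d) :
    (1 - γ) * (gridDist j k) / m ≤ dist (cellMap γ j x) (cellMap γ k y) := by
  have hne : (Finset.univ : Finset (Fin d)).Nonempty := by
    obtain ⟨i, _⟩ := Function.ne_iff.mp hjk
    exact ⟨i, Finset.mem_univ i⟩
  obtain ⟨i, _, hi⟩ := Finset.exists_mem_eq_sup Finset.univ hne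
    (fun i => Nat.dist (j i) (k i))
  have ht1 : 1 ≤ gridDist j k := one_le_gridDist hjk
  set t : ℕ := gridDist j k with htdef
  have hti : (t : ℝ) = |(j i : ℝ) - (k i : ℝ)| := by
    rw [htdef]; simp only [gridDist]; rw [hi, natDist_cast_real]
  have hcoord : (t : ℝ) - γ * |x i - y i| ≤ m * |cellMap γ j x i - cellMap γ k y i| := by
    rw [cellMap_apply, cellMap_apply, div_sub_div_same, abs_div,
      abs_of_pos (by positivity : (0:ℝ) < (m:ℝ)), mul_div_cancel₀ _ (by positivity : (m:ℝ) ≠ 0)]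
    have he : γ * x i + (j i:ℝ) + (1-γ)/2 - (γ * y i + (k i:ℝ) + (1-γ)/2)
        = ((j i:ℝ) - k i) + γ * (x i - y i) := by ring
    rw [he]
    have h1 := abs_add_le (((j i:ℝ) - k i) + γ * (x i - y i)) (-(γ * (x i - y i)))
    simp only [add_neg_cancel_right, abs_neg, abs_mul, abs_of_pos hγ0] at h1
    linarith [hti ▸ h1]
  have hxy1 : |x i - y i| ≤ 1 := by
    have hxb := hx i; have hyb := hy i
    rw [abs_le]
    exact ⟨by linarith [hxb.1, hxb.2, hyb.1, hyb.2], by linarith [hxb.1, hxb.2, hyb.1, hyb.2]⟩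
  have ht : (1:ℝ) ≤ t := by exact_mod_cast ht1
  have step : (1 - γ) * t ≤ m * |cellMap γ j x i - cellMap γ k y i| := by
    nlinarith [hcoord]
  have := abs_coord_le_dist (cellMap γ j x) (cellMap γ k y) i
  rw [div_le_iff₀ (by positivity : (0:ℝ) < (m:ℝ))]
  nlinarith [this]

noncomputable def tailK (p : ℝ) : ℝ := ∑' n : ℕ, (n:ℝ) ^ (-p)

lemma tailK_nonneg (p : ℝ) : 0 ≤ tailK p :=
  tsum_nonneg (fun n => Real.rpow_nonneg (Nat.cast_nonneg n) _)

lemma summable_rpow_neg {p : ℝ} (hp : 1 < p) : Summable (fun n : ℕ => (n:ℝ) ^ (-p)) :=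
  Real.summable_nat_rpow.2 (by linarith)

/-- per-coordinate sum bound -/
lemma sum_coord_bound {p : ℝ} (hp : 1 < p) (m k : ℕ) :
    ∑ a ∈ Finset.range m, ((max (Nat.dist a k) 1 : ℕ) : ℝ) ^ (-p) ≤ 1 + 2 * tailK p := by
  set F : ℕ → ℝ := fun t => ((max t 1 : ℕ) : ℝ) ^ (-p) with hF
  have hFnonneg : ∀ t, 0 ≤ F t := fun t => Real.rpow_nonneg (Nat.cast_nonneg _) _
  have hFle : ∀ t : ℕ, F t ≤ (if t = 0 then (1:ℝ) else 0) + (t:ℝ) ^ (-p) := by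
    intro t
    rcases Nat.eq_zero_or_pos t with h | h
    · subst h
      rw [hF]
      have hz : ((0:ℕ):ℝ) ^ (-p) = 0 := by
        rw [Nat.cast_zero, Real.zero_rpow (show -p ≠ 0 by linarith)]
      simp [hz]
      exact Real.rpow_nonneg le_rfl _
    · have hmax : max t 1 = t := max_eq_left h
      rw [hF]
      simp only [hmax, if_neg (Nat.pos_iff_ne_zero.mp h)]
      simp
  have hsubset : Finset.range m ⊆ Finset.range (k+1) ∪ Finset.Ico (k+1) (k+1+m) := by
    intro a ha
    simp only [Finset.mem_range, Finset.mem_union, Finset.mem_Ico] at *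
    omega
  have hdisj : Disjoint (Finset.range (k+1)) (Finset.Ico (k+1) (k+1+m)) := by
    rw [Finset.disjoint_left]
    intro a ha hb
    simp only [Finset.mem_range, Finset.mem_Ico] at *
    omega
  calc ∑ a ∈ Finset.range m, F (Nat.dist a k)
      ≤ ∑ a ∈ Finset.range (k+1) ∪ Finset.Ico (k+1) (k+1+m), F (Nat.dist a k) :=
        Finset.sum_le_sum_of_subset_of_nonneg hsubset (fun a _ _ => hFnonneg _)
    _ = ∑ a ∈ Finset.range (k+1), F (Nat.dist a k)
        + ∑ a ∈ Finset.Ico (k+1) (k+1+m), F (Nat.dist a k) := Finset.sum_union hdisj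
    _ ≤ (1 + tailK p) + tailK p := by
        gcongr ?_ + ?_
        · -- left piece
          have h1 : ∀ a ∈ Finset.range (k+1), F (Nat.dist a k) = F (k - a) := by
            intro a ha
            rw [Nat.dist_eq_sub_of_le (by simpa [Nat.lt_succ_iff] using ha)]
          rw [Finset.sum_congr rfl h1]
          have h2 : ∑ a ∈ Finset.range (k+1), F (k - a) = ∑ a ∈ Finset.range (k+1), F a := by
            have := Finset.sum_range_reflect F (k+1)
            simpa using this
          rw [h2]
          calc ∑ a ∈ Finset.range (k+1), F a
              ≤ ∑ a ∈ Finset.range (k+1), ((if a = 0 then (1:ℝ) else 0) + (a:ℝ)^(-p)) :=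
                Finset.sum_le_sum (fun a _ => hFle a)
            _ = (if (0:ℕ) ∈ Finset.range (k+1) then (1:ℝ) else 0)
                + ∑ a ∈ Finset.range (k+1), (a:ℝ)^(-p) := by
                rw [Finset.sum_add_distrib, Finset.sum_ite_eq' (Finset.range (k+1)) 0 (fun _ => (1:ℝ))]
            _ ≤ 1 + tailK p := by
                gcongr
                · simp
                · exact (summable_rpow_neg hp).sum_le_tsum _ (fun n _ => Real.rpow_nonneg (Nat.cast_nonneg n) _)
        · -- right piece
          rw [Finset.sum_Ico_eq_sum_range]
          have h3 : ∀ i ∈ Finset.range (k+1+m-(k+1)), F (Nat.dist (k+1+i) k) = ((i+1:ℕ):ℝ)^(-p) := by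
            intro i _
            have : Nat.dist (k+1+i) k = i + 1 := by
              rw [Nat.dist_eq_sub_of_le_right (by omega)]; omega
            rw [this, hF]
            simp [max_eq_left (by omega : 1 ≤ i + 1)]
          rw [Finset.sum_congr rfl h3]
          have h4 : ∑ i ∈ Finset.range (k+1+m-(k+1)), ((i+1:ℕ):ℝ)^(-p)
              = ∑ t ∈ (Finset.range (k+1+m-(k+1))).image (fun t => t + 1),
                  (fun t : ℕ => (t:ℝ)^(-p)) t := by
            rw [Finset.sum_image (f := fun t : ℕ => (t:ℝ)^(-p)) (g := fun t => t + 1)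
              (fun a _ b _ h => by simpa using h)]
          rw [h4]
          exact (summable_rpow_neg hp).sum_le_tsum _ (fun n _ => Real.rpow_nonneg (Nat.cast_nonneg n) _)
    _ ≤ 1 + 2 * tailK p := by linarith

lemma gridDist_rpow_le_prod {d m : ℕ} (hd : 1 ≤ d) {s : ℝ} (hs : (d:ℝ) < s)
    {j k : Fin d → Fin m} (hjk : j ≠ k) :
    ((gridDist j k : ℝ)) ^ (-s)
      ≤ ∏ i : Fin d, ((max (Nat.dist (j i) (k i)) 1 : ℕ) : ℝ) ^ (-(s/d)) := by
  have hd0 : (0:ℝ) < d := by exact_mod_cast hd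
  have ht1 : (1:ℝ) ≤ (gridDist j k : ℝ) := by exact_mod_cast one_le_gridDist hjk
  have ht0 : (0:ℝ) < (gridDist j k : ℝ) := by linarith
  have key : ((gridDist j k : ℝ)) ^ (-s) = ∏ i : Fin d, ((gridDist j k : ℝ)) ^ (-(s/d)) := by
    rw [Finset.prod_const, Finset.card_univ, Fintype.card_fin,
      ← Real.rpow_natCast (((gridDist j k : ℝ)) ^ (-(s/d))) d, ← Real.rpow_mul ht0.le]
    congr 1
    field_simp
  rw [key]
  apply Finset.prod_le_prod
  · intro i _
    exact Real.rpow_nonneg ht0.le _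
  · intro i _
    apply Real.rpow_le_rpow_of_nonpos
    · exact_mod_cast Nat.lt_of_lt_of_le Nat.zero_lt_one (le_max_right _ 1)
    · have h1 : Nat.dist (j i) (k i) ≤ gridDist j k :=
        Finset.le_sup (f := fun i => Nat.dist (j i) (k i)) (Finset.mem_univ i)
      have h2 : max (Nat.dist (j i) (k i)) 1 ≤ gridDist j k :=
        max_le h1 (one_le_gridDist hjk)
      exact_mod_cast h2
    · rw [neg_nonpos]
      exact div_nonneg (by linarith) hd0.le

lemma grid_double_sum {d m : ℕ} (hd : 1 ≤ d) {s : ℝ} (hs : (d:ℝ) < s) :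
    ∑ j : Fin d → Fin m, ∑ k ∈ Finset.univ.erase j, ((gridDist j k : ℝ)) ^ (-s)
      ≤ (m:ℝ)^d * (1 + 2 * tailK (s/d))^d := by
  have hd0 : (0:ℝ) < d := by exact_mod_cast hd
  have hp : 1 < s / d := (one_lt_div hd0).mpr hs
  have hA0 : (0:ℝ) ≤ 1 + 2 * tailK (s/d) := by linarith [tailK_nonneg (s/d)]
  have inner : ∀ j : Fin d → Fin m,
      ∑ k ∈ Finset.univ.erase j, ((gridDist j k : ℝ)) ^ (-s)
        ≤ (1 + 2 * tailK (s/d))^d := by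
    intro j
    calc ∑ k ∈ Finset.univ.erase j, ((gridDist j k : ℝ)) ^ (-s)
        ≤ ∑ k ∈ Finset.univ.erase j,
            ∏ i : Fin d, ((max (Nat.dist (j i) (k i)) 1 : ℕ) : ℝ) ^ (-(s/d)) := by
          apply Finset.sum_le_sum
          intro k hk
          exact gridDist_rpow_le_prod hd hs (fun h => (Finset.mem_erase.mp hk).1 h.symm)
      _ ≤ ∑ k : Fin d → Fin m,
            ∏ i : Fin d, ((max (Nat.dist (j i) (k i)) 1 : ℕ) : ℝ) ^ (-(s/d)) := by
          apply Finset.sum_le_sum_of_subset_of_nonneg (Finset.erase_subset _ _)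
          intro k _ _
          exact Finset.prod_nonneg (fun i _ => Real.rpow_nonneg (Nat.cast_nonneg _) _)
      _ = ∏ i : Fin d, ∑ a : Fin m, ((max (Nat.dist (j i) (a : Fin m)) 1 : ℕ) : ℝ) ^ (-(s/d)) := by
          rw [Finset.prod_univ_sum]
          rw [Fintype.piFinset_univ]
      _ ≤ ∏ i : Fin d, (1 + 2 * tailK (s/d)) := by
          apply Finset.prod_le_prod
          · intro i _
            exact Finset.sum_nonneg (fun a _ => Real.rpow_nonneg (Nat.cast_nonneg _) _)
          · intro i _
            have := sum_coord_bound hp m (j i)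
            calc ∑ a : Fin m, ((max (Nat.dist (j i) (a : Fin m)) 1 : ℕ) : ℝ) ^ (-(s/d))
                = ∑ a ∈ Finset.range m, ((max (Nat.dist a (j i)) 1 : ℕ) : ℝ) ^ (-(s/d)) := by
                  rw [← Fin.sum_univ_eq_sum_range (fun a => ((max (Nat.dist a ((j i):ℕ)) 1 : ℕ) : ℝ) ^ (-(s/d))) m]
                  apply Finset.sum_congr rfl
                  intro a _
                  rw [Nat.dist_comm]
              _ ≤ 1 + 2 * tailK (s/d) := sum_coord_bound hp m (j i)
      _ = (1 + 2 * tailK (s/d))^d := by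
          rw [Finset.prod_const, Finset.card_univ, Fintype.card_fin]
  calc ∑ j : Fin d → Fin m, ∑ k ∈ Finset.univ.erase j, ((gridDist j k : ℝ)) ^ (-s)
      ≤ ∑ _j : Fin d → Fin m, (1 + 2 * tailK (s/d))^d := Finset.sum_le_sum (fun j _ => inner j)
    _ = (m:ℝ)^d * (1 + 2 * tailK (s/d))^d := by
        rw [Finset.sum_const, Finset.card_univ]
        simp only [Fintype.card_fun, Fintype.card_fin, nsmul_eq_mul]
        push_cast
        ring

lemma ennreal_rpow_neg_antitone {a b : ℝ≥0∞} (h : a ≤ b) {s : ℝ} (hs : 0 ≤ s) :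
    b ^ (-s) ≤ a ^ (-s) := by
  rw [ENNReal.rpow_neg, ENNReal.rpow_neg]
  exact ENNReal.inv_le_inv.mpr (ENNReal.rpow_le_rpow h hs)

lemma config_bound {d m N : ℕ} (hd : 1 ≤ d) (hm : 0 < m) {s γ : ℝ} (hs : (d:ℝ) < s)
    (hγ0 : 0 < γ) (hγ1 : γ < 1) (ω : Finset (EuclideanSpace ℝ (Fin d)))
    (hω : ↑ω ⊆ unitCube d) (hcard : ω.card = N) :
    minRieszEnergy s (unitCube d) (m^d * N) ≤
      ENNReal.ofReal ((m:ℝ)^d * (γ/m)^(-s)) * rieszEnergy s ω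
      + ENNReal.ofReal (((1-γ)/m)^(-s) * ((m:ℝ)^d * (1 + 2*tailK (s/d))^d) * (N:ℝ)^2) := by
  have hs0 : (0:ℝ) < s := lt_of_le_of_lt (by exact_mod_cast Nat.zero_le d) hs
  have hm0 : (0:ℝ) < m := by exact_mod_cast hm
  set T : (Fin d → Fin m) × EuclideanSpace ℝ (Fin d) → EuclideanSpace ℝ (Fin d) :=
    fun a => cellMap γ a.1 a.2 with hT
  set P : Finset ((Fin d → Fin m) × EuclideanSpace ℝ (Fin d)) := Finset.univ ×ˢ ω with hP
  have hmemP : ∀ a ∈ P, a.2 ∈ ω := fun a ha => (Finset.mem_product.mp ha).2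
  have hinj : ∀ a ∈ P, ∀ b ∈ P, T a = T b → a = b := by
    intro a ha b hb h
    obtain ⟨h1, h2⟩ := cellMap_inj hγ0 hγ1 (hω (hmemP a ha)) (hω (hmemP b hb)) hm h
    exact Prod.ext h1 h2
  set ω' := P.image T with hω'def
  have hsub : ↑ω' ⊆ unitCube d := by
    intro z hz
    rw [hω'def, Finset.coe_image] at hz
    obtain ⟨a, ha, rfl⟩ := hz
    exact cellMap_mem hγ0 hγ1 hm _ (hω (hmemP a ha))
  have hcard' : ω'.card = m^d * N := by
    rw [hω'def, Finset.card_image_of_injOn (fun a ha b hb h => hinj a ha b hb h),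
      hP, Finset.card_product, hcard, Finset.card_univ]
    congr 1
    simp [Fintype.card_fun]
  have hmin : minRieszEnergy s (unitCube d) (m^d * N) ≤ rieszEnergy s ω' :=
    iInf_le_of_le ω' (iInf_le_of_le hsub (by rw [hcard']; exact iInf_le _ rfl))
  refine le_trans hmin ?_
  -- rewrite energy as double sum over P
  have hEn : rieszEnergy s ω' = ∑ a ∈ P, ∑ b ∈ P,
      (if a = b then 0 else edist (T a) (T b) ^ (-s)) := by
    rw [hω'def]
    unfold rieszEnergy
    rw [Finset.sum_image hinj]
    apply Finset.sum_congr rfl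
    intro a ha
    rw [Finset.sum_image hinj]
    apply Finset.sum_congr rfl
    intro b hb
    by_cases h : a = b
    · simp [h]
    · rw [if_neg h, if_neg (fun hc => h (hinj a ha b hb hc))]
  rw [hEn, hP]
  rw [Finset.sum_product]
  have hEn2 : ∀ j : Fin d → Fin m, ∀ x,
      ∑ b ∈ Finset.univ ×ˢ ω, (if (j, x) = b then 0 else edist (T (j,x)) (T b) ^ (-s))
      = ∑ k : Fin d → Fin m, ∑ y ∈ ω,
          (if (j, x) = (k, y) then 0 else edist (T (j,x)) (T (k,y)) ^ (-s)) := by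
    intro j x
    rw [Finset.sum_product]
  simp_rw [hEn2]
  -- now goal: ∑ j, ∑ x ∈ ω, ∑ k, ∑ y ∈ ω, ... ≤ ...
  have hswap : ∀ j : Fin d → Fin m,
      ∑ x ∈ ω, ∑ k : Fin d → Fin m, ∑ y ∈ ω,
        (if (j, x) = (k, y) then 0 else edist (T (j,x)) (T (k,y)) ^ (-s))
      = ∑ k : Fin d → Fin m, ∑ x ∈ ω, ∑ y ∈ ω,
        (if (j, x) = (k, y) then 0 else edist (T (j,x)) (T (k,y)) ^ (-s)) := by
    intro j
    exact Finset.sum_comm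
  simp_rw [hswap]
  have hsplitk : ∀ j : Fin d → Fin m,
      ∑ k : Fin d → Fin m, ∑ x ∈ ω, ∑ y ∈ ω,
        (if (j, x) = (k, y) then 0 else edist (T (j,x)) (T (k,y)) ^ (-s))
      = (∑ x ∈ ω, ∑ y ∈ ω,
          (if (j, x) = (j, y) then 0 else edist (T (j,x)) (T (j,y)) ^ (-s)))
        + ∑ k ∈ Finset.univ.erase j, ∑ x ∈ ω, ∑ y ∈ ω,
          (if (j, x) = (k, y) then 0 else edist (T (j,x)) (T (k,y)) ^ (-s)) := by
    intro j
    exact (Finset.add_sum_erase _ _ (Finset.mem_univ j)).symm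
  simp_rw [hsplitk, Finset.sum_add_distrib]
  -- diagonal part
  have hdiag : ∀ j : Fin d → Fin m,
      ∑ x ∈ ω, ∑ y ∈ ω, (if (j, x) = (j, y) then 0 else edist (T (j,x)) (T (j,y)) ^ (-s))
      = ENNReal.ofReal ((γ/m)^(-s)) * rieszEnergy s ω := by
    intro j
    unfold rieszEnergy
    rw [Finset.mul_sum]
    apply Finset.sum_congr rfl
    intro x hx
    rw [Finset.mul_sum]
    apply Finset.sum_congr rfl
    intro y hy
    by_cases hxy : x = y
    · simp [hxy]
    · rw [if_neg (by simp [hxy]), if_neg hxy]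
      have hdxy : 0 < dist x y := dist_pos.mpr hxy
      rw [hT]
      simp only
      rw [edist_dist, cellMap_dist_same hγ0.le hm j x y, edist_dist,
        ENNReal.ofReal_rpow_of_pos (by positivity), ENNReal.ofReal_rpow_of_pos hdxy,
        ← ENNReal.ofReal_mul (Real.rpow_nonneg (by positivity) _),
        ← Real.mul_rpow (by positivity) hdxy.le]
  simp_rw [hdiag]
  rw [Finset.sum_const, Finset.card_univ]
  -- off-diagonal part
  have hoff : ∀ j : Fin d → Fin m, ∀ k ∈ Finset.univ.erase j,
      ∑ x ∈ ω, ∑ y ∈ ω, (if (j, x) = (k, y) then 0 else edist (T (j,x)) (T (k,y)) ^ (-s))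
      ≤ ENNReal.ofReal ((N:ℝ)^2 * (((1-γ)/m)^(-s) * ((gridDist j k:ℝ))^(-s))) := by
    intro j k hk
    have hjk : j ≠ k := fun h => (Finset.mem_erase.mp hk).1 h.symm
    have ht1 : (1:ℝ) ≤ (gridDist j k : ℝ) := by exact_mod_cast one_le_gridDist hjk
    have hterm : ∀ x ∈ ω, ∀ y ∈ ω,
        (if ((j, x) : _ × _) = (k, y) then 0 else edist (T (j,x)) (T (k,y)) ^ (-s))
        ≤ ENNReal.ofReal (((1-γ)/m)^(-s) * ((gridDist j k:ℝ))^(-s)) := by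
      intro x hx y hy
      by_cases hc : ((j, x) : _ × _) = (k, y)
      · rw [if_pos hc]; exact zero_le
      rw [if_neg hc]
      have hlow : (0:ℝ) < (1 - γ) * (gridDist j k) / m := by
        have : (0:ℝ) < 1 - γ := by linarith
        positivity
      have h1 : ENNReal.ofReal ((1 - γ) * (gridDist j k) / m) ≤ edist (T (j,x)) (T (k,y)) := by
        rw [hT]; simp only
        rw [edist_dist]
        exact ENNReal.ofReal_le_ofReal (cellMap_dist_cross hγ0 hγ1 hm hjk (hω hx) (hω hy))
      calc edist (T (j,x)) (T (k,y)) ^ (-s)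
          ≤ (ENNReal.ofReal ((1 - γ) * (gridDist j k) / m)) ^ (-s) :=
            ennreal_rpow_neg_antitone h1 hs0.le
        _ = ENNReal.ofReal (((1-γ)/m)^(-s) * ((gridDist j k:ℝ))^(-s)) := by
            rw [ENNReal.ofReal_rpow_of_pos hlow]
            congr 1
            have hg : (0:ℝ) < 1 - γ := by linarith
            rw [show (1 - γ) * (gridDist j k : ℝ) / m = ((1-γ)/m) * (gridDist j k : ℝ) by ring,
              Real.mul_rpow (by positivity) (by linarith)]
    calc ∑ x ∈ ω, ∑ y ∈ ω, (if ((j, x) : _ × _) = (k, y) then 0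
            else edist (T (j,x)) (T (k,y)) ^ (-s))
        ≤ ∑ _x ∈ ω, ∑ _y ∈ ω, ENNReal.ofReal (((1-γ)/m)^(-s) * ((gridDist j k:ℝ))^(-s)) :=
          Finset.sum_le_sum (fun x hx => Finset.sum_le_sum (fun y hy => hterm x hx y hy))
      _ = ENNReal.ofReal ((N:ℝ)^2 * (((1-γ)/m)^(-s) * ((gridDist j k:ℝ))^(-s))) := by
          rw [Finset.sum_const, Finset.sum_const, hcard, smul_smul, nsmul_eq_mul,
            show ((N*N : ℕ) : ℝ≥0∞) = ENNReal.ofReal ((N:ℝ)^2) by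
              rw [← ENNReal.ofReal_natCast]; congr 1; push_cast; ring,
            ← ENNReal.ofReal_mul (by positivity)]
  -- total off-diagonal bound
  have hg : (0:ℝ) < 1 - γ := by linarith
  have hc0 : (0:ℝ) ≤ ((1-γ)/m)^(-s) := Real.rpow_nonneg (by positivity) _
  have hA0 : (0:ℝ) ≤ 1 + 2 * tailK (s/d) := by linarith [tailK_nonneg (s/d)]
  have hoffsum : ∑ j : Fin d → Fin m, ∑ k ∈ Finset.univ.erase j,
      ∑ x ∈ ω, ∑ y ∈ ω, (if (j, x) = (k, y) then 0 else edist (T (j,x)) (T (k,y)) ^ (-s))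
      ≤ ENNReal.ofReal (((1-γ)/m)^(-s) * ((m:ℝ)^d * (1 + 2*tailK (s/d))^d) * (N:ℝ)^2) := by
    calc ∑ j : Fin d → Fin m, ∑ k ∈ Finset.univ.erase j,
        ∑ x ∈ ω, ∑ y ∈ ω, (if (j, x) = (k, y) then 0 else edist (T (j,x)) (T (k,y)) ^ (-s))
        ≤ ∑ j : Fin d → Fin m, ∑ k ∈ Finset.univ.erase j,
            ENNReal.ofReal ((N:ℝ)^2 * (((1-γ)/m)^(-s) * ((gridDist j k:ℝ))^(-s))) :=
          Finset.sum_le_sum (fun j _ => Finset.sum_le_sum (fun k hk => hoff j k hk))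
      _ = ENNReal.ofReal (∑ j : Fin d → Fin m, ∑ k ∈ Finset.univ.erase j,
            (N:ℝ)^2 * (((1-γ)/m)^(-s) * ((gridDist j k:ℝ))^(-s))) := by
          rw [ENNReal.ofReal_sum_of_nonneg]
          · apply Finset.sum_congr rfl
            intro j _
            rw [ENNReal.ofReal_sum_of_nonneg]
            intro k _
            have := Real.rpow_nonneg (Nat.cast_nonneg (gridDist j k)) (-s)
            positivity
          · intro j _
            apply Finset.sum_nonneg
            intro k _
            have := Real.rpow_nonneg (Nat.cast_nonneg (gridDist j k)) (-s)
            positivity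
      _ ≤ ENNReal.ofReal (((1-γ)/m)^(-s) * ((m:ℝ)^d * (1 + 2*tailK (s/d))^d) * (N:ℝ)^2) := by
          apply ENNReal.ofReal_le_ofReal
          calc ∑ j : Fin d → Fin m, ∑ k ∈ Finset.univ.erase j,
              (N:ℝ)^2 * (((1-γ)/m)^(-s) * ((gridDist j k:ℝ))^(-s))
              = (N:ℝ)^2 * ((1-γ)/m)^(-s)
                * ∑ j : Fin d → Fin m, ∑ k ∈ Finset.univ.erase j, ((gridDist j k:ℝ))^(-s) := by
                rw [Finset.mul_sum]
                apply Finset.sum_congr rfl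
                intro j _
                rw [Finset.mul_sum]
                apply Finset.sum_congr rfl
                intro k _
                ring
            _ ≤ (N:ℝ)^2 * ((1-γ)/m)^(-s) * ((m:ℝ)^d * (1 + 2*tailK (s/d))^d) :=
                mul_le_mul_of_nonneg_left (grid_double_sum hd hs) (by positivity)
            _ = ((1-γ)/m)^(-s) * ((m:ℝ)^d * (1 + 2*tailK (s/d))^d) * (N:ℝ)^2 := by ring
  -- assemble
  apply add_le_add _ hoffsum
  -- diagonal: card • (c0 * E) = ofReal(m^d * (γ/m)^(-s)) * E
  have hcardF : (Fintype.card (Fin d → Fin m)) = m ^ d := by simp [Fintype.card_fun]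
  rw [hcardF, nsmul_eq_mul,
    show ((m^d : ℕ) : ℝ≥0∞) = ENNReal.ofReal ((m:ℝ)^d) by
      rw [← ENNReal.ofReal_natCast]; congr 1; push_cast; ring,
    ← mul_assoc, ← ENNReal.ofReal_mul (by positivity)]

lemma min_bound {d m N : ℕ} (hd : 1 ≤ d) (hm : 0 < m) {s γ : ℝ} (hs : (d:ℝ) < s)
    (hγ0 : 0 < γ) (hγ1 : γ < 1) :
    minRieszEnergy s (unitCube d) (m^d * N) ≤
      ENNReal.ofReal ((m:ℝ)^d * (γ/m)^(-s)) * minRieszEnergy s (unitCube d) N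
      + ENNReal.ofReal (((1-γ)/m)^(-s) * ((m:ℝ)^d * (1 + 2*tailK (s/d))^d) * (N:ℝ)^2) := by
  have hm0 : (0:ℝ) < m := by exact_mod_cast hm
  set c1 : ℝ≥0∞ := ENNReal.ofReal ((m:ℝ)^d * (γ/m)^(-s)) with hc1
  set b : ℝ≥0∞ :=
    ENNReal.ofReal (((1-γ)/m)^(-s) * ((m:ℝ)^d * (1 + 2*tailK (s/d))^d) * (N:ℝ)^2) with hb
  set X : ℝ≥0∞ := minRieszEnergy s (unitCube d) N with hX
  have hc1pos : 0 < c1 := ENNReal.ofReal_pos.mpr (by positivity)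
  have hc1top : c1 ≠ ⊤ := ENNReal.ofReal_ne_top
  by_cases hinf : X = ⊤
  · rw [hinf, ENNReal.mul_top hc1pos.ne']
    exact le_top
  · apply ENNReal.le_of_forall_pos_le_add
    intro ε hε _
    have hδ : (0:ℝ≥0∞) < (ε:ℝ≥0∞) / c1 :=
      ENNReal.div_pos (by exact_mod_cast hε.ne') hc1top
    have hlt : X < X + (ε:ℝ≥0∞) / c1 := ENNReal.lt_add_right hinf hδ.ne'
    have hex : ∃ ω : Finset (EuclideanSpace ℝ (Fin d)), ∃ _ : ↑ω ⊆ unitCube d,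
        ∃ _ : ω.card = N, rieszEnergy s ω < X + (ε:ℝ≥0∞) / c1 := by
      have h := hlt
      rw [hX] at h
      conv_lhs at h => rw [minRieszEnergy]
      simpa only [iInf_lt_iff] using h
    obtain ⟨ω, hω, hcard, hE⟩ := hex
    calc minRieszEnergy s (unitCube d) (m^d * N)
        ≤ c1 * rieszEnergy s ω + b := config_bound hd hm hs hγ0 hγ1 ω hω hcard
      _ ≤ c1 * (X + (ε:ℝ≥0∞) / c1) + b := add_le_add_left (mul_le_mul_right hE.le _) _
      _ = (c1 * X + b) + c1 * ((ε:ℝ≥0∞) / c1) := by ring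
      _ ≤ (c1 * X + b) + ε := add_le_add_right ENNReal.mul_div_le _

/-- sub-multiplicative-type estimate for the normalized minimal `s`-energy of
the unit cube: for all `γ ∈ (0,1)`, `m ≥ 1`, `N ≥ 1`,
`ℰ_s(U^d, m^d N)/(m^d N)^{1+s/d} ≤ γ^{-s} ℰ_s(U^d,N)/N^{1+s/d} + C(1-γ)^{-s} N^{1-s/d}`. -/
theorem minRieszEnergy_unitCube_subdivision (d : ℕ) (hd : 1 ≤ d) (s : ℝ)
    (hs : (d : ℝ) < s) :
    ∃ C : ℝ, 0 < C ∧ ∀ γ : ℝ, 0 < γ → γ < 1 → ∀ m N : ℕ, 0 < m → 0 < N →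
      minRieszEnergy s (unitCube d) (m ^ d * N) /
          ENNReal.ofReal (((m ^ d * N : ℕ) : ℝ) ^ (1 + s / (d : ℝ))) ≤
        ENNReal.ofReal (γ ^ (-s)) *
            (minRieszEnergy s (unitCube d) N / ENNReal.ofReal ((N : ℝ) ^ (1 + s / (d : ℝ)))) +
          ENNReal.ofReal (C * (1 - γ) ^ (-s) * (N : ℝ) ^ (1 - s / (d : ℝ))) := by
  have hd0 : (0:ℝ) < d := by exact_mod_cast hd
  set C : ℝ := (1 + 2 * tailK (s/d))^d with hC
  have hA1 : (1:ℝ) ≤ 1 + 2 * tailK (s/d) := by linarith [tailK_nonneg (s/d)]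
  have hCpos : 0 < C := by positivity
  refine ⟨C, hCpos, ?_⟩
  intro γ hγ0 hγ1 m N hm hN
  have hm0 : (0:ℝ) < m := by exact_mod_cast hm
  have hN0 : (0:ℝ) < N := by exact_mod_cast hN
  have hg : (0:ℝ) < 1 - γ := by linarith
  set P : ℝ := 1 + s / d with hP
  -- key real computations
  have hmds : (0:ℝ) < (m:ℝ) ^ ((d:ℝ) + s) := Real.rpow_pos_of_pos hm0 _
  have hv : (((m ^ d * N : ℕ) : ℝ)) ^ P = (m:ℝ) ^ ((d:ℝ) + s) * (N:ℝ) ^ P := by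
    have h1 : (((m ^ d * N : ℕ) : ℝ)) = (m:ℝ)^d * (N:ℝ) := by push_cast; ring
    rw [h1, Real.mul_rpow (by positivity) hN0.le, ← Real.rpow_natCast (m:ℝ) d,
      ← Real.rpow_mul hm0.le]
    congr 2
    rw [hP]
    field_simp
  have hu : (m:ℝ)^d * (γ/m)^(-s) = γ^(-s) * (m:ℝ) ^ ((d:ℝ) + s) := by
    rw [Real.div_rpow hγ0.le hm0.le, Real.rpow_neg hm0.le, div_eq_mul_inv, inv_inv,
      Real.rpow_add hm0, ← Real.rpow_natCast (m:ℝ) d]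
    ring
  have hw : ((1-γ)/m)^(-s) = (1-γ)^(-s) * (m:ℝ)^s := by
    rw [Real.div_rpow hg.le hm0.le, Real.rpow_neg hm0.le, div_eq_mul_inv, inv_inv]
  have hD : (0:ℝ) < (((m ^ d * N : ℕ) : ℝ)) ^ P := by rw [hv]; positivity
  have hNP : (0:ℝ) < (N:ℝ) ^ P := Real.rpow_pos_of_pos hN0 _
  -- apply min_bound and divide
  have key := min_bound (N := N) hd hm hs hγ0 hγ1
  have := ENNReal.div_le_div_right key (ENNReal.ofReal ((((m ^ d * N : ℕ) : ℝ)) ^ P))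
  refine le_trans this ?_
  rw [ENNReal.add_div]
  apply add_le_add
  · -- first term
    have h3 : ENNReal.ofReal ((m:ℝ)^d * (γ/m)^(-s)) /
        ENNReal.ofReal ((((m ^ d * N : ℕ) : ℝ)) ^ P)
        = ENNReal.ofReal (γ^(-s)) / ENNReal.ofReal ((N:ℝ) ^ P) := by
      rw [← ENNReal.ofReal_div_of_pos hD, hu, hv,
        show γ^(-s) * (m:ℝ) ^ ((d:ℝ) + s) / ((m:ℝ) ^ ((d:ℝ) + s) * (N:ℝ) ^ P)
          = γ^(-s) / (N:ℝ)^P by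
            rw [mul_comm (γ^(-s)) ((m:ℝ) ^ ((d:ℝ) + s)), mul_div_mul_left _ _ hmds.ne'],
        ENNReal.ofReal_div_of_pos hNP]
    have e1 : ENNReal.ofReal ((m:ℝ)^d * (γ/m)^(-s)) * minRieszEnergy s (unitCube d) N /
        ENNReal.ofReal ((((m ^ d * N : ℕ) : ℝ)) ^ P)
        = ENNReal.ofReal (γ^(-s)) *
          (minRieszEnergy s (unitCube d) N / ENNReal.ofReal ((N:ℝ) ^ P)) := by
      rw [mul_comm (ENNReal.ofReal ((m:ℝ)^d * (γ/m)^(-s))), mul_div_assoc, h3,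
        ← mul_div_assoc, mul_comm (minRieszEnergy s (unitCube d) N), mul_div_assoc]
    rw [e1]
  · -- second term
    rw [← ENNReal.ofReal_div_of_pos hD]
    apply ENNReal.ofReal_le_ofReal
    have e2 : ((1-γ)/m)^(-s) * ((m:ℝ)^d * (1 + 2*tailK (s/d))^d) * (N:ℝ)^2 /
        ((((m ^ d * N : ℕ) : ℝ)) ^ P) = C * (1-γ)^(-s) * (N:ℝ)^(1 - s/d) := by
      rw [hv, hw, hC]
      have hsplit : ((N:ℝ))^(2:ℕ) = (N:ℝ)^(1 - s/d) * (N:ℝ)^P := by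
        rw [← Real.rpow_natCast (N:ℝ) 2, ← Real.rpow_add hN0]
        congr 1
        rw [hP]; push_cast; ring
      rw [hsplit]
      have hmd : ((m:ℝ))^(d:ℕ) = (m:ℝ)^((d:ℝ)) := (Real.rpow_natCast _ d).symm
      rw [hmd]
      rw [show (1-γ)^(-s) * (m:ℝ)^s * ((m:ℝ)^((d:ℝ)) * (1 + 2*tailK (s/d))^d)
            * ((N:ℝ)^(1 - s/d) * (N:ℝ)^P)
          = ((1 + 2*tailK (s/d))^d * (1-γ)^(-s) * (N:ℝ)^(1 - s/d))
            * (((m:ℝ)^((d:ℝ)) * (m:ℝ)^s) * (N:ℝ)^P) by ring,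
        ← Real.rpow_add hm0]
      rw [mul_div_assoc, div_self (by positivity), mul_one]
    rw [e2]
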